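/- Let H be a graph obtained from a graph G by attaching, at a distinguished vertex s, a pendant path s - s¹ - … - s^{r-1} and at s^{r-1} two pendant paths of length r each. If f is an r-hop Roman dominating function on H, then the total f-weight on the set consisting of s, the path vertices s¹,…,s^{r-1}, and the 2r vertices of the two pendant paths at s^{r-1} is at least 2, provided r ≥ 2. -/

import Mathlib

/-- The exact-distance-`r` graph of `G`: same vertices, edges between pairs at
distance exactly `r` in `G`. -/
def exactDistGraph {V : Type*} (G : SimpleGraph V) (r : ℕ) : SimpleGraph V :=
  SimpleGraph.fromRel (fun u v => G.dist u v = r)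

/-- `S` is a dominating set of `H`. -/
def IsDomSet {V : Type*} (H : SimpleGraph V) (S : Set V) : Prop :=
  ∀ v ∉ S, ∃ s ∈ S, H.Adj v s

/-- `S` is a total dominating set of `H`. -/
def IsTotalDomSet {V : Type*} (H : SimpleGraph V) (S : Set V) : Prop :=
  ∀ v : V, ∃ s ∈ S, H.Adj v s

/-- `S` is an `r`-step dominating set of `G`: every vertex is at distance exactly `r`
from some vertex of `S`. -/
def IsRStepDomSet {V : Type*} (G : SimpleGraph V) (r : ℕ) (S : Set V) : Prop :=
  ∀ v : V, ∃ s ∈ S, G.dist v s = r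

/-- `S` is an `r`-hop dominating set of `G`: every vertex not in `S` is at distance
exactly `r` from some vertex of `S`. -/
def IsRHopDomSet {V : Type*} (G : SimpleGraph V) (r : ℕ) (S : Set V) : Prop :=
  ∀ v ∉ S, ∃ s ∈ S, G.dist v s = r

/-- `f` is a Roman dominating function on `H`. -/
def IsRDF {V : Type*} (H : SimpleGraph V) (f : V → ℕ) : Prop :=
  (∀ v, f v ≤ 2) ∧ ∀ v, f v = 0 → ∃ u, f u = 2 ∧ H.Adj u v

/-- `f` is an `r`-hop Roman dominating function on `G`. -/
def IsRHRDF {V : Type*} (G : SimpleGraph V) (r : ℕ) (f : V → ℕ) : Prop :=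
  (∀ v, f v ≤ 2) ∧ ∀ v, f v = 0 → ∃ u, f u = 2 ∧ G.dist u v = r

set_option maxHeartbeats 1000000

private def QQ {W : Type*} (r : ℕ) (t a b : Fin r → W) (u : W) (n : ℕ) : Prop :=
  (∃ j : Fin r, u = t j ∧ 2*r - 1 - j.val ≤ n) ∨
  (∃ i : Fin r, u = a i ∧ r - 1 - i.val ≤ n) ∨
  (∃ i : Fin r, u = b i ∧ r + 1 + i.val ≤ n)

private lemma key {W : Type*} (H : SimpleGraph W) (r : ℕ) (hr : 2 ≤ r)
    (t a b : Fin r → W)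
    (tinj : Function.Injective t) (ainj : Function.Injective a)
    (binj : Function.Injective b)
    (ta : ∀ i j, t i ≠ a j) (tb : ∀ i j, t i ≠ b j) (ab : ∀ i j, a i ≠ b j)
    (S : Set W) (hS : S = Set.range t ∪ Set.range a ∪ Set.range b)
    (hadj : ∀ u v : W, u ∈ S → v ∈ S → (H.Adj u v ↔
      ((∃ i j : Fin r, u = t i ∧ v = t j ∧ (i.val + 1 = j.val ∨ j.val + 1 = i.val)) ∨
       (∃ i j : Fin r, u = a i ∧ v = a j ∧ (i.val + 1 = j.val ∨ j.val + 1 = i.val)) ∨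
       (∃ i j : Fin r, u = b i ∧ v = b j ∧ (i.val + 1 = j.val ∨ j.val + 1 = i.val)) ∨
       (u = t ⟨r-1, Nat.sub_lt (Nat.lt_of_lt_of_le Nat.zero_lt_two hr) Nat.one_pos⟩ ∧ v = a ⟨0, Nat.lt_of_lt_of_le Nat.zero_lt_two hr⟩) ∨
       (u = a ⟨0, Nat.lt_of_lt_of_le Nat.zero_lt_two hr⟩ ∧ v = t ⟨r-1, Nat.sub_lt (Nat.lt_of_lt_of_le Nat.zero_lt_two hr) Nat.one_pos⟩) ∨
       (u = t ⟨r-1, Nat.sub_lt (Nat.lt_of_lt_of_le Nat.zero_lt_two hr) Nat.one_pos⟩ ∧ v = b ⟨0, Nat.lt_of_lt_of_le Nat.zero_lt_two hr⟩) ∨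
       (u = b ⟨0, Nat.lt_of_lt_of_le Nat.zero_lt_two hr⟩ ∧ v = t ⟨r-1, Nat.sub_lt (Nat.lt_of_lt_of_le Nat.zero_lt_two hr) Nat.one_pos⟩))))
    (hpend : ∀ u ∈ S, u ≠ t ⟨0, Nat.lt_of_lt_of_le Nat.zero_lt_two hr⟩ → ∀ w : W, H.Adj u w → w ∈ S)
    (u : W) (hd : H.dist u (a ⟨r-1, Nat.sub_lt (Nat.lt_of_lt_of_le Nat.zero_lt_two hr) Nat.one_pos⟩) = r) :
    u = t ⟨r-1, Nat.sub_lt (Nat.lt_of_lt_of_le Nat.zero_lt_two hr) Nat.one_pos⟩ := by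
  have htS : ∀ j, t j ∈ S := fun j => by rw [hS]; exact Or.inl (Or.inl ⟨j, rfl⟩)
  have haS : ∀ j, a j ∈ S := fun j => by rw [hS]; exact Or.inl (Or.inr ⟨j, rfl⟩)
  have hbS : ∀ j, b j ∈ S := fun j => by rw [hS]; exact Or.inr ⟨j, rfl⟩
  have hQS : ∀ v n, QQ r t a b v n → v ∈ S := by
    rintro v n (⟨j, rfl, -⟩ | ⟨i, rfl, -⟩ | ⟨i, rfl, -⟩)
    exacts [htS j, haS i, hbS i]
  -- all short walks to a ⟨r-1⟩ stay in the structure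
  have walkQ : ∀ {u z : W} (p : H.Walk u z), z = a ⟨r-1, by omega⟩ →
      2*r - 1 ≤ p.length ∨ QQ r t a b u p.length := by
    intro u z p
    induction p with
    | nil =>
      intro hz
      right; right; left
      exact ⟨⟨r-1, by omega⟩, hz, by simp⟩
    | @cons u v _ h q ih =>
      intro hz
      rcases ih hz with hlong | hQ
      · left; simp [SimpleGraph.Walk.length_cons]; omega
      have hvS : v ∈ S := hQS _ _ hQ
      by_cases hv0 : v = t ⟨0, by omega⟩
      · rcases hQ with ⟨j, hv', hle⟩ | ⟨i, hv', hle⟩ | ⟨i, hv', hle⟩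
        · have hj : j.val = 0 := congrArg Fin.val (tinj (hv'.symm.trans hv0))
          left; simp [SimpleGraph.Walk.length_cons]; omega
        · exact absurd (hv0.symm.trans hv') (ta _ _)
        · exact absurd (hv0.symm.trans hv') (tb _ _)
      · have huS : u ∈ S := hpend v hvS hv0 u h.symm
        right
        have hedge := (hadj u v huS hvS).mp h
        simp only [SimpleGraph.Walk.length_cons]
        rcases hedge with ⟨i, j, hu, hv, hij⟩ | ⟨i, j, hu, hv, hij⟩ | ⟨i, j, hu, hv, hij⟩ |
          ⟨hu, hv⟩ | ⟨hu, hv⟩ | ⟨hu, hv⟩ | ⟨hu, hv⟩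
        · rcases hQ with ⟨j', hv', hle⟩ | ⟨i', hv', hle⟩ | ⟨i', hv', hle⟩
          · have hj : j = j' := tinj (hv.symm.trans hv')
            subst hj
            exact Or.inl ⟨i, hu, by have := i.isLt; omega⟩
          · exact absurd (hv.symm.trans hv') (ta _ _)
          · exact absurd (hv.symm.trans hv') (tb _ _)
        · rcases hQ with ⟨j', hv', hle⟩ | ⟨i', hv', hle⟩ | ⟨i', hv', hle⟩
          · exact absurd (hv'.symm.trans hv) (ta _ _)
          · have hj : j = i' := ainj (hv.symm.trans hv')
            subst hj
            exact Or.inr (Or.inl ⟨i, hu, by have := i.isLt; omega⟩)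
          · exact absurd (hv.symm.trans hv') (ab _ _)
        · rcases hQ with ⟨j', hv', hle⟩ | ⟨i', hv', hle⟩ | ⟨i', hv', hle⟩
          · exact absurd (hv'.symm.trans hv) (tb _ _)
          · exact absurd (hv'.symm.trans hv) (ab _ _)
          · have hj : j = i' := binj (hv.symm.trans hv')
            subst hj
            exact Or.inr (Or.inr ⟨i, hu, by have := i.isLt; omega⟩)
        · -- u = t (r-1), v = a 0
          rcases hQ with ⟨j', hv', hle⟩ | ⟨i', hv', hle⟩ | ⟨i', hv', hle⟩
          · exact absurd (hv'.symm.trans hv) (ta _ _)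
          · have hj : (⟨0, by omega⟩ : Fin r) = i' := ainj (hv.symm.trans hv')
            have hj' : i'.val = 0 := by rw [← hj]
            exact Or.inl ⟨⟨r-1, by omega⟩, hu, by simp; omega⟩
          · exact absurd (hv.symm.trans hv') (ab _ _)
        · -- u = a 0, v = t (r-1)
          rcases hQ with ⟨j', hv', hle⟩ | ⟨i', hv', hle⟩ | ⟨i', hv', hle⟩
          · have hj : (⟨r-1, by omega⟩ : Fin r) = j' := tinj (hv.symm.trans hv')
            have hj' : j'.val = r - 1 := by rw [← hj]
            exact Or.inr (Or.inl ⟨⟨0, by omega⟩, hu, by simp; omega⟩)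
          · exact absurd (hv.symm.trans hv') (ta _ _)
          · exact absurd (hv.symm.trans hv') (tb _ _)
        · -- u = t (r-1), v = b 0
          rcases hQ with ⟨j', hv', hle⟩ | ⟨i', hv', hle⟩ | ⟨i', hv', hle⟩
          · exact absurd (hv'.symm.trans hv) (tb _ _)
          · exact absurd (hv'.symm.trans hv) (ab _ _)
          · have hj : (⟨0, by omega⟩ : Fin r) = i' := binj (hv.symm.trans hv')
            have hj' : i'.val = 0 := by rw [← hj]
            exact Or.inl ⟨⟨r-1, by omega⟩, hu, by simp; omega⟩
        · -- u = b 0, v = t (r-1)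
          rcases hQ with ⟨j', hv', hle⟩ | ⟨i', hv', hle⟩ | ⟨i', hv', hle⟩
          · have hj : (⟨r-1, by omega⟩ : Fin r) = j' := tinj (hv.symm.trans hv')
            have hj' : j'.val = r - 1 := by rw [← hj]
            exact Or.inr (Or.inr ⟨⟨0, by omega⟩, hu, by simp; omega⟩)
          · exact absurd (hv.symm.trans hv') (ta _ _)
          · exact absurd (hv.symm.trans hv') (tb _ _)
  -- explicit short walks along the a-path
  have walkA : ∀ k, k < r → ∃ p : H.Walk (a ⟨r-1-k, by omega⟩) (a ⟨r-1, by omega⟩),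
      p.length = k := by
    intro k
    induction k with
    | zero => intro _; exact ⟨SimpleGraph.Walk.nil, rfl⟩
    | succ k ih =>
      intro hk
      obtain ⟨p, hp⟩ := ih (by omega)
      have hadj' : H.Adj (a ⟨r-1-(k+1), by omega⟩) (a ⟨r-1-k, by omega⟩) := by
        refine (hadj _ _ (haS _) (haS _)).mpr ?_
        exact Or.inr (Or.inl ⟨_, _, rfl, rfl, Or.inl (by simp; omega)⟩)
      exact ⟨SimpleGraph.Walk.cons hadj' p, by simp [hp]⟩
  have distA : ∀ i : Fin r, H.dist (a i) (a ⟨r-1, by omega⟩) ≤ r - 1 - i.val := by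
    intro i
    obtain ⟨p, hp⟩ := walkA (r-1-i.val) (by omega)
    have hi : i = ⟨r-1-(r-1-i.val), by omega⟩ := Fin.ext (by have := i.isLt; simp; omega)
    have hcast : a i = a ⟨r-1-(r-1-i.val), by omega⟩ := congrArg a hi
    rw [hcast]
    have hle := SimpleGraph.dist_le p
    rw [hp] at hle
    exact hle
  -- conclude
  have hreach : H.Reachable u (a ⟨r-1, by omega⟩) := by
    by_contra hnr
    rw [SimpleGraph.dist_eq_zero_of_not_reachable hnr] at hd
    omega
  obtain ⟨p, hp⟩ := hreach.exists_walk_length_eq_dist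
  rcases walkQ p rfl with hlong | hQ
  · rw [hp, hd] at hlong; omega
  rw [hp, hd] at hQ
  rcases hQ with ⟨j, hu, hle⟩ | ⟨i, hu, hle⟩ | ⟨i, hu, hle⟩
  · have hj : j = ⟨r-1, by omega⟩ := Fin.ext (by have := j.isLt; simp; omega)
    exact hu.trans (congrArg t hj)
  · exfalso
    have := distA i
    rw [hu] at hd
    omega
  · exfalso; have := i.isLt; omega

theorem stmt_17 {W : Type*} [Fintype W] (H : SimpleGraph W) (r : ℕ) (hr : 2 ≤ r)
    (t a b : Fin r → W)
    (hinj : Function.Injective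
      (Sum.elim t (Sum.elim a b) : Fin r ⊕ Fin r ⊕ Fin r → W))
    (S : Set W) (hS : S = Set.range t ∪ Set.range a ∪ Set.range b)
    (hadj : ∀ u v : W, u ∈ S → v ∈ S → (H.Adj u v ↔
      ((∃ i j : Fin r, u = t i ∧ v = t j ∧ (i.val + 1 = j.val ∨ j.val + 1 = i.val)) ∨
       (∃ i j : Fin r, u = a i ∧ v = a j ∧ (i.val + 1 = j.val ∨ j.val + 1 = i.val)) ∨
       (∃ i j : Fin r, u = b i ∧ v = b j ∧ (i.val + 1 = j.val ∨ j.val + 1 = i.val)) ∨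
       (u = t ⟨r-1, by omega⟩ ∧ v = a ⟨0, by omega⟩) ∨
       (u = a ⟨0, by omega⟩ ∧ v = t ⟨r-1, by omega⟩) ∨
       (u = t ⟨r-1, by omega⟩ ∧ v = b ⟨0, by omega⟩) ∨
       (u = b ⟨0, by omega⟩ ∧ v = t ⟨r-1, by omega⟩))))
    (hpend : ∀ u ∈ S, u ≠ t ⟨0, by omega⟩ → ∀ w : W, H.Adj u w → w ∈ S)
    (f : W → ℕ) (hf : IsRHRDF H r f) :
    2 ≤ (∑ i : Fin r, f (t i)) + (∑ i : Fin r, f (a i)) + (∑ i : Fin r, f (b i)) := by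
  have tinj : Function.Injective t := fun i j h => by
    have := hinj (a₁ := Sum.inl i) (a₂ := Sum.inl j) (by simpa using h)
    simpa using this
  have ainj : Function.Injective a := fun i j h => by
    have := hinj (a₁ := Sum.inr (Sum.inl i)) (a₂ := Sum.inr (Sum.inl j)) (by simpa using h)
    simpa using this
  have binj : Function.Injective b := fun i j h => by
    have := hinj (a₁ := Sum.inr (Sum.inr i)) (a₂ := Sum.inr (Sum.inr j)) (by simpa using h)
    simpa using this
  have ta : ∀ i j, t i ≠ a j := fun i j h => by
    have := hinj (a₁ := Sum.inl i) (a₂ := Sum.inr (Sum.inl j)) (by simpa using h)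
    simp at this
  have tb : ∀ i j, t i ≠ b j := fun i j h => by
    have := hinj (a₁ := Sum.inl i) (a₂ := Sum.inr (Sum.inr j)) (by simpa using h)
    simp at this
  have ab : ∀ i j, a i ≠ b j := fun i j h => by
    have := hinj (a₁ := Sum.inr (Sum.inl i)) (a₂ := Sum.inr (Sum.inr j)) (by simpa using h)
    simp at this
  have keyA : ∀ u, H.dist u (a ⟨r-1, by omega⟩) = r → u = t ⟨r-1, by omega⟩ :=
    key H r hr t a b tinj ainj binj ta tb ab S hS hadj hpend
  have keyB : ∀ u, H.dist u (b ⟨r-1, by omega⟩) = r → u = t ⟨r-1, by omega⟩ := by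
    refine key H r hr t b a tinj binj ainj tb ta (fun i j h => ab j i h.symm) S ?_ ?_ hpend
    · rw [hS]; ext x; simp only [Set.mem_union]; tauto
    · intro u v hu hv
      rw [hadj u v hu hv]
      constructor
      · rintro (h|h|h|h|h|h|h)
        exacts [Or.inl h, Or.inr (Or.inr (Or.inl h)), Or.inr (Or.inl h),
          Or.inr (Or.inr (Or.inr (Or.inr (Or.inr (Or.inl h))))),
          Or.inr (Or.inr (Or.inr (Or.inr (Or.inr (Or.inr h))))),
          Or.inr (Or.inr (Or.inr (Or.inl h))),
          Or.inr (Or.inr (Or.inr (Or.inr (Or.inl h))))]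
      · rintro (h|h|h|h|h|h|h)
        exacts [Or.inl h, Or.inr (Or.inr (Or.inl h)), Or.inr (Or.inl h),
          Or.inr (Or.inr (Or.inr (Or.inr (Or.inr (Or.inl h))))),
          Or.inr (Or.inr (Or.inr (Or.inr (Or.inr (Or.inr h))))),
          Or.inr (Or.inr (Or.inr (Or.inl h))),
          Or.inr (Or.inr (Or.inr (Or.inr (Or.inl h))))]
  have sum_ge : ∀ (g : Fin r → W) (j : Fin r), f (g j) ≤ ∑ i, f (g i) := fun g j =>
    Finset.single_le_sum (f := fun i => f (g i)) (fun _ _ => Nat.zero_le _) (Finset.mem_univ j)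
  have hst := sum_ge t ⟨r-1, by omega⟩
  have hsa := sum_ge a ⟨r-1, by omega⟩
  have hsb := sum_ge b ⟨r-1, by omega⟩
  by_cases h0a : f (a ⟨r-1, by omega⟩) = 0
  · obtain ⟨u, hu2, hud⟩ := hf.2 _ h0a
    rw [keyA u hud] at hu2
    omega
  · by_cases h0b : f (b ⟨r-1, by omega⟩) = 0
    · obtain ⟨u, hu2, hud⟩ := hf.2 _ h0b
      rw [keyB u hud] at hu2
      omega
    · omega
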